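/- arXiv:2502.19636 — 4 statements merged into one kernel-verified Lean document; each statement's English description precedes it below -/
import Mathlib

section
/- For any finite exponential sum: if p(x) = ∑_{0<|m|≤N} p_m e^{2πimx}, θ ∈ ℝ irrational, Q ∈ ℕ, φ ∈ ℝ, then |∑_{k=0}^{Q−1} p(kθ + φ)| ≤ (π/2) · (‖Qθ‖ / min_{1≤m≤N} ‖mθ‖) · ∑_{0<|m|≤N} |m·p_m|. -/
open scoped BigOperators

/-- Distance from `x` to the nearest integer. -/
noncomputable def nint (x : ℝ) : ℝ := |x - round x|

/-- Complete quotients `α_n` of `θ`: `α_0 = θ`, `α_{n+1} = 1 / {α_n}`. -/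
noncomputable def cq (θ : ℝ) : ℕ → ℝ
  | 0 => θ
  | n + 1 => 1 / Int.fract (cq θ n)

/-- Partial quotients `a_n` of the continued fraction of `θ`. -/
noncomputable def pq (θ : ℝ) (n : ℕ) : ℤ := ⌊cq θ n⌋

/-- Denominators `Q_n` of the convergents of `θ`: `Q_0 = 1`, `Q_1 = a_1`,
`Q_{n+2} = a_{n+2} Q_{n+1} + Q_n`. -/
noncomputable def qden (θ : ℝ) : ℕ → ℤ
  | 0 => 1
  | 1 => pq θ 1
  | n + 2 => pq θ (n + 2) * qden θ (n + 1) + qden θ n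


section AuxStmt5
open Real Complex

lemma nint_eq_norm (x : ℝ) : nint x = ‖(x : UnitAddCircle)‖ := UnitAddCircle.norm_eq.symm

lemma nint_neg (x : ℝ) : nint (-x) = nint x := by
  rw [nint_eq_norm, nint_eq_norm]
  have : ((-x : ℝ) : UnitAddCircle) = -((x : ℝ) : UnitAddCircle) := by
    rw [← QuotientAddGroup.mk_neg]
  rw [this, norm_neg]

lemma nint_int_mul_le (m : ℤ) (x : ℝ) : nint (m * x) ≤ |(m : ℝ)| * nint x := by
  rw [nint_eq_norm, nint_eq_norm]
  have h1 : ((m * x : ℝ) : UnitAddCircle) = m • ((x : ℝ) : UnitAddCircle) := by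
    rw [← QuotientAddGroup.mk_zsmul, zsmul_eq_mul]
  rw [h1]
  have := norm_zsmul_le m ((x : ℝ) : UnitAddCircle)
  simpa [Int.norm_eq_abs] using this

lemma abs_sin_pi_mul (t : ℝ) : |Real.sin (π * t)| = |Real.sin (π * (t - round t))| := by
  have : π * t = π * (t - round t) + (round t : ℤ) * π := by push_cast; ring
  rw [this, Real.sin_add_int_mul_pi, abs_mul]
  have : |((-1 : ℝ) ^ round t)| = 1 := by
    rcases Int.even_or_odd (round t) with h | h
    · rw [h.neg_one_zpow]; simp
    · rw [Odd.neg_one_zpow h]; simp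
  rw [this, one_mul]

lemma sin_le_pi_nint (t : ℝ) : |Real.sin (π * t)| ≤ π * nint t := by
  rw [abs_sin_pi_mul]
  calc |Real.sin (π * (t - round t))| ≤ |π * (t - round t)| := Real.abs_sin_le_abs
    _ = π * nint t := by rw [abs_mul, abs_of_pos Real.pi_pos]; rfl

lemma two_nint_le_sin (t : ℝ) : 2 * nint t ≤ |Real.sin (π * t)| := by
  rw [abs_sin_pi_mul]
  have h2 : |π * (t - round t)| ≤ π / 2 := by
    rw [abs_mul, abs_of_pos Real.pi_pos]
    have := abs_sub_round t
    nlinarith [Real.pi_pos]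
  have := Real.mul_abs_le_abs_sin h2
  rw [abs_mul, abs_of_pos Real.pi_pos] at this
  have hpi : (2:ℝ) / π * (π * |t - round t|) = 2 * |t - round t| := by
    field_simp
  rw [hpi] at this
  exact this

lemma abs_exp_sub_one (t : ℝ) :
    ‖Complex.exp (2 * π * Complex.I * t) - 1‖ = 2 * |Real.sin (π * t)| := by
  have key : Complex.exp (2 * π * Complex.I * t) - 1
      = Complex.exp ((π * t : ℝ) * Complex.I) *
        (Complex.exp ((π * t : ℝ) * Complex.I) - Complex.exp (-((π * t : ℝ) * Complex.I))) := by
    rw [mul_sub, ← Complex.exp_add, ← Complex.exp_add]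
    push_cast
    ring_nf
    rw [Complex.exp_zero]
    ring_nf
  have hs : Complex.exp ((π * t : ℝ) * Complex.I) - Complex.exp (-((π * t : ℝ) * Complex.I))
      = 2 * Complex.I * Complex.sin ((π * t : ℝ)) := by
    rw [Complex.sin]
    have hI : Complex.I * Complex.I = -1 := Complex.I_mul_I
    field_simp
    ring_nf
    rw [Complex.I_sq]
    ring
  rw [key, hs, norm_mul, Complex.norm_exp_ofReal_mul_I, one_mul, norm_mul, norm_mul]
  rw [← Complex.ofReal_sin, Complex.norm_real]
  simp

lemma nint_pos_of_irrational {x : ℝ} (hx : Irrational x) : 0 < nint x := by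
  rw [nint, abs_pos, sub_ne_zero]
  exact hx.ne_int (round x)

lemma nint_nonneg (x : ℝ) : 0 ≤ nint x := abs_nonneg _

lemma term_bound (θ : ℝ) (hθ : Irrational θ) (m : ℤ) (hm : m ≠ 0) (Q : ℕ) (φ : ℝ)
    {S : ℝ} (hS : 0 < S) (hSle : S ≤ nint ((m : ℝ) * θ)) :
    ‖∑ k ∈ Finset.range Q,
        Complex.exp (2 * (π : ℂ) * Complex.I * (m : ℂ) * (((k : ℝ) * θ + φ : ℝ) : ℂ))‖ ≤
      π / 2 * (nint ((Q : ℝ) * θ) / S) * |(m : ℝ)| := by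
  set z : ℂ := Complex.exp (2 * (π : ℂ) * Complex.I * (((m : ℝ) * θ : ℝ) : ℂ)) with hz
  have hterm : ∀ k : ℕ, Complex.exp (2 * (π : ℂ) * Complex.I * (m : ℂ) * (((k : ℝ) * θ + φ : ℝ) : ℂ))
      = Complex.exp (2 * (π : ℂ) * Complex.I * (((m : ℝ) * φ : ℝ) : ℂ)) * z ^ k := by
    intro k
    rw [hz, ← Complex.exp_nat_mul, ← Complex.exp_add]
    congr 1
    push_cast
    ring
  have h2piI : (2 * (π : ℂ) * Complex.I) ≠ 0 := by
    simp [Real.pi_ne_zero, Complex.I_ne_zero]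
  have hz1 : z ≠ 1 := by
    intro h
    rw [hz, Complex.exp_eq_one_iff] at h
    obtain ⟨n, hn⟩ := h
    have h2 : (((m : ℝ) * θ : ℝ) : ℂ) = (n : ℂ) := by
      apply mul_left_cancel₀ h2piI
      rw [hn]; ring
    have h3 : (m : ℝ) * θ = (n : ℝ) := by exact_mod_cast h2
    exact (hθ.intCast_mul hm).ne_int n (by exact_mod_cast h3)
  have hsum : (∑ k ∈ Finset.range Q,
      Complex.exp (2 * (π : ℂ) * Complex.I * (m : ℂ) * (((k : ℝ) * θ + φ : ℝ) : ℂ)))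
      = Complex.exp (2 * (π : ℂ) * Complex.I * (((m : ℝ) * φ : ℝ) : ℂ)) *
        ∑ k ∈ Finset.range Q, z ^ k := by
    rw [Finset.mul_sum]
    exact Finset.sum_congr rfl fun k _ => hterm k
  have habs1 : ‖Complex.exp (2 * (π : ℂ) * Complex.I * (((m : ℝ) * φ : ℝ) : ℂ))‖ = 1 := by
    rw [show (2 * (π : ℂ) * Complex.I * (((m : ℝ) * φ : ℝ) : ℂ))
        = ((2 * π * ((m : ℝ) * φ) : ℝ) : ℂ) * Complex.I by push_cast; ring,
      Complex.norm_exp_ofReal_mul_I]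
  rw [hsum, norm_mul, habs1, one_mul, geom_sum_eq hz1, norm_div]
  have hzQ : z ^ Q = Complex.exp (2 * (π : ℂ) * Complex.I * (((m : ℝ) * (Q : ℝ) * θ : ℝ) : ℂ)) := by
    rw [hz, ← Complex.exp_nat_mul]
    congr 1
    push_cast
    ring
  rw [hzQ, abs_exp_sub_one, hz, abs_exp_sub_one]
  have hnum : 2 * |Real.sin (π * ((m : ℝ) * (Q : ℝ) * θ))| ≤ 2 * π * (|(m : ℝ)| * nint ((Q : ℝ) * θ)) := by
    have h1 := sin_le_pi_nint ((m : ℝ) * (Q : ℝ) * θ)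
    have h2 : nint ((m : ℝ) * ((Q : ℝ) * θ)) ≤ |(m : ℝ)| * nint ((Q : ℝ) * θ) := nint_int_mul_le m _
    rw [show (m : ℝ) * (Q : ℝ) * θ = (m : ℝ) * ((Q : ℝ) * θ) by ring] at h1 ⊢
    nlinarith [Real.pi_pos]
  have hden : 4 * S ≤ 2 * |Real.sin (π * ((m : ℝ) * θ))| := by
    have := two_nint_le_sin ((m : ℝ) * θ)
    linarith
  calc 2 * |Real.sin (π * ((m : ℝ) * (Q : ℝ) * θ))| / (2 * |Real.sin (π * ((m : ℝ) * θ))|)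
      ≤ 2 * π * (|(m : ℝ)| * nint ((Q : ℝ) * θ)) / (4 * S) := by
        apply div_le_div₀ (mul_nonneg (by positivity) (mul_nonneg (abs_nonneg _) (nint_nonneg _))) hnum (by positivity) hden
    _ = π / 2 * (nint ((Q : ℝ) * θ) / S) * |(m : ℝ)| := by
        field_simp
        ring

end AuxStmt5

open Complex in
/-- general bound for exponential sums of a trigonometric polynomial. -/
theorem stmt5 (θ : ℝ) (hθ : Irrational θ) (N : ℕ) (c : ℤ → ℂ)
    (p : ℝ → ℂ)
    (hp : ∀ x : ℝ, p x = ∑ m ∈ (Finset.Icc (-(N : ℤ)) (N : ℤ)).erase 0,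
      c m * Complex.exp (2 * Real.pi * Complex.I * m * x))
    (Q : ℕ) (φ : ℝ) :
    ‖∑ k ∈ Finset.range Q, p (k * θ + φ)‖ ≤
      Real.pi / 2 *
        (nint (Q * θ) / sInf ((fun m : ℕ => nint (m * θ)) '' Set.Icc 1 N)) *
        (∑ m ∈ (Finset.Icc (-(N : ℤ)) (N : ℤ)).erase 0, |(m : ℝ)| * ‖c m‖) := by
  set M := (Finset.Icc (-(N : ℤ)) (N : ℤ)).erase 0 with hM
  set S := sInf ((fun m : ℕ => nint (m * θ)) '' Set.Icc 1 N) with hSdef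
  have hfin : ((fun m : ℕ => nint (m * θ)) '' Set.Icc 1 N).Finite :=
    (Set.finite_Icc 1 N).image _
  have hswap : (∑ k ∈ Finset.range Q, p (k * θ + φ))
      = ∑ m ∈ M, c m * ∑ k ∈ Finset.range Q,
          Complex.exp (2 * (Real.pi : ℂ) * Complex.I * (m : ℂ) * (((k : ℝ) * θ + φ : ℝ) : ℂ)) := by
    calc (∑ k ∈ Finset.range Q, p (k * θ + φ))
        = ∑ k ∈ Finset.range Q, ∑ m ∈ M,
            c m * Complex.exp (2 * (Real.pi : ℂ) * Complex.I * (m : ℂ) * (((k : ℝ) * θ + φ : ℝ) : ℂ)) :=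
          Finset.sum_congr rfl fun k _ => hp _
      _ = _ := by
          rw [Finset.sum_comm]
          exact Finset.sum_congr rfl fun m _ => (Finset.mul_sum _ _ _).symm
  rw [hswap]
  refine le_trans (norm_sum_le _ _) ?_
  rw [Finset.mul_sum]
  refine Finset.sum_le_sum ?_
  intro m hm
  have hm0 : m ≠ 0 := (Finset.mem_erase.mp hm).1
  have hmIcc := Finset.mem_Icc.mp (Finset.mem_erase.mp hm).2
  have hna1 : 1 ≤ m.natAbs := by omega
  have hnaN : m.natAbs ≤ N := by omega
  have hne : ((fun m : ℕ => nint (m * θ)) '' Set.Icc 1 N).Nonempty :=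
    ⟨nint ((1 : ℕ) * θ), ⟨1, ⟨le_refl 1, by omega⟩, rfl⟩⟩
  have hS : 0 < S := by
    obtain ⟨j, hj, hjeq⟩ := hne.csInf_mem hfin
    rw [hSdef, ← hjeq]
    exact nint_pos_of_irrational (hθ.natCast_mul (Nat.one_le_iff_ne_zero.mp hj.1))
  have hSle : S ≤ nint ((m : ℝ) * θ) := by
    have hcast : nint ((m : ℝ) * θ) = nint ((m.natAbs : ℝ) * θ) := by
      rcases le_or_gt 0 m with h | h
      · congr 2
        rw [Nat.cast_natAbs]
        simp [abs_of_nonneg h]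
      · have : ((m.natAbs : ℝ)) = -(m : ℝ) := by
          rw [Nat.cast_natAbs]
          simp [abs_of_neg h]
        rw [this, neg_mul, nint_neg]
    rw [hcast]
    exact csInf_le hfin.bddBelow ⟨m.natAbs, ⟨hna1, hnaN⟩, rfl⟩
  have hb := term_bound θ hθ m hm0 Q φ hS hSle
  rw [norm_mul]
  calc ‖c m‖ * ‖∑ k ∈ Finset.range Q,
        Complex.exp (2 * (Real.pi : ℂ) * Complex.I * (m : ℂ) * (((k : ℝ) * θ + φ : ℝ) : ℂ))‖
      ≤ ‖c m‖ * (Real.pi / 2 * (nint ((Q : ℝ) * θ) / S) * |(m : ℝ)|) :=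
        mul_le_mul_of_nonneg_left hb (norm_nonneg _)
    _ = Real.pi / 2 * (nint ((Q : ℝ) * θ) / S) * (|(m : ℝ)| * ‖c m‖) := by ring
end

section
/- Let f be a continuous 1-periodic even function (f(x) = f(−x) for all x) of bounded variation with ∫_0^1 f = 0. Then for every irrational θ, liminf_{Q→∞} |∑_{k=0}^{Q−1} f(kθ)| = 0. -/
open scoped BigOperators

open Set Filter


lemma myIcc_add_Icc (f : ℝ → ℝ) {a b c : ℝ} (hab : a ≤ b) (hbc : b ≤ c) :
    eVariationOn f (Icc a b) + eVariationOn f (Icc b c) = eVariationOn f (Icc a c) := by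
  have := eVariationOn.Icc_add_Icc f (s := Set.univ) hab hbc (Set.mem_univ b)
  simpa using this

lemma tele (f : ℝ → ℝ) (c : ℕ → ℝ) (hc : Monotone c) (N : ℕ) :
    ∑ i ∈ Finset.range N, eVariationOn f (Icc (c i) (c (i+1))) = eVariationOn f (Icc (c 0) (c N)) := by
  induction N with
  | zero => simp [eVariationOn.subsingleton f (Set.subsingleton_Icc_of_ge le_rfl)]
  | succ n ih =>
    rw [Finset.sum_range_succ, ih, myIcc_add_Icc f (hc (Nat.zero_le n)) (hc (Nat.le_succ n))]

lemma per_int (f : ℝ → ℝ) (hper : ∀ x : ℝ, f (x + 1) = f x) (x : ℝ) (n : ℤ) :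
    f (x + n) = f x := by
  have h : Function.Periodic f 1 := hper
  simpa using (h.int_mul n) x

lemma var_shift (f : ℝ → ℝ) (hper : ∀ x : ℝ, f (x + 1) = f x) (a b : ℝ) :
    eVariationOn f (Icc (a+1) (b+1)) = eVariationOn f (Icc a b) := by
  have h1 : eVariationOn (f ∘ (fun x => x + 1)) (Icc a b)
      = eVariationOn f ((fun x => x + 1) '' (Icc a b)) :=
    eVariationOn.comp_eq_of_monotoneOn f _ ((monotone_id.add_const 1).monotoneOn _)
  have h2 : (f ∘ (fun x : ℝ => x + 1)) = f := by funext y; exact hper y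
  rw [h2] at h1
  rw [h1, Set.image_add_const_Icc]

lemma W_ne_top (f : ℝ → ℝ) (hper : ∀ x : ℝ, f (x + 1) = f x)
    (hBV : BoundedVariationOn f (Set.Icc 0 1)) :
    eVariationOn f (Icc (-1 : ℝ) 2) ≠ ⊤ := by
  have h01 : eVariationOn f (Icc (0:ℝ) 1) ≠ ⊤ := hBV
  have hm1 : eVariationOn f (Icc (-1:ℝ) 0) ≠ ⊤ := by
    have h := var_shift f hper (-1) 0
    rw [show (-1:ℝ)+1 = 0 by ring, show (0:ℝ)+1 = 1 by ring] at h
    rw [← h]; exact h01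
  have h12 : eVariationOn f (Icc (1:ℝ) 2) ≠ ⊤ := by
    have := var_shift f hper 0 1
    rw [show (0:ℝ)+1 = 1 by ring, show (1:ℝ)+1 = 2 by ring] at this
    rw [this]; exact hBV
  have e1 := myIcc_add_Icc f (show (-1:ℝ) ≤ 0 by norm_num) (show (0:ℝ) ≤ 1 by norm_num)
  have e2 := myIcc_add_Icc f (show (-1:ℝ) ≤ 1 by norm_num) (show (1:ℝ) ≤ 2 by norm_num)
  rw [← e2, e1.symm]
  simp [ENNReal.add_ne_top, hm1, h01, h12]

lemma DK (f : ℝ → ℝ) (hcont : Continuous f) (hper : ∀ x : ℝ, f (x + 1) = f x)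
    (hBV : BoundedVariationOn f (Set.Icc 0 1))
    (hmean : (∫ x in (0:ℝ)..1, f x) = 0) (θ : ℝ)
    (p : ℤ) (q : ℕ) (hq : 0 < q) (hcop : Int.gcd p (q : ℤ) = 1)
    (happ : |θ - (p : ℝ) / q| < 1 / (q : ℝ)^2) :
    |∑ k ∈ Finset.range q, f (k * θ)| ≤ 2 * (eVariationOn f (Icc (-1 : ℝ) 2)).toReal := by
  set W := eVariationOn f (Icc (-1 : ℝ) 2) with hW
  have hWt : W ≠ ⊤ := W_ne_top f hper hBV
  have hq0 : (0:ℝ) < q := by exact_mod_cast hq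
  have hqZ : (0:ℤ) < q := by exact_mod_cast hq
  set η : ℝ := θ - (p : ℝ) / q with hη
  -- σ and its inverse
  set A : ℤ := Int.gcdA p q with hA
  have hbez : p * A + q * Int.gcdB p q = 1 := by
    have := Int.gcd_eq_gcd_ab p q
    rw [hcop] at this; exact_mod_cast this.symm
  set σ : ℕ → ℕ := fun k => ((k * p) % q).toNat with hσ
  set τ : ℕ → ℕ := fun j => ((j * A) % q).toNat with hτ
  have hσcast : ∀ k : ℕ, (σ k : ℤ) = (k * p) % q := fun k =>
    Int.toNat_of_nonneg (Int.emod_nonneg _ (by omega))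
  have hτcast : ∀ j : ℕ, (τ j : ℤ) = (j * A) % q := fun j =>
    Int.toNat_of_nonneg (Int.emod_nonneg _ (by omega))
  have hσlt : ∀ k : ℕ, σ k ∈ Finset.range q := by
    intro k
    have h1 : ((k:ℤ) * p) % q < q := Int.emod_lt_of_pos _ hqZ
    have h2 := hσcast k
    simp only [Finset.mem_range]
    omega

  
  -- cancellation lemma for modular inverse
  have cancel : ∀ (u v : ℤ), u * v ≡ 1 [ZMOD (q:ℤ)] → ∀ k : ℕ, k < q →
      (((((k : ℤ) * u) % q).toNat : ℤ) * v) % q = (k : ℤ) := by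
    intro u v huv k hk
    have e0 : ((((k : ℤ) * u) % q).toNat : ℤ) = ((k : ℤ) * u) % q :=
      Int.toNat_of_nonneg (Int.emod_nonneg _ (by omega))
    rw [e0]
    have m1 : (((k : ℤ) * u) % q) * v ≡ ((k : ℤ) * u) * v [ZMOD q] :=
      Int.ModEq.mul_right v (Int.emod_emod_of_dvd _ dvd_rfl)
    have m2 : ((k : ℤ) * u) * v ≡ (k : ℤ) * 1 [ZMOD q] := by
      have e1 : ((k : ℤ) * u) * v = (k : ℤ) * (u * v) := by ring
      rw [e1]
      exact Int.ModEq.mul_left _ huv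
    have m3 : (((k : ℤ) * u) % q) * v ≡ (k : ℤ) [ZMOD q] := by
      simpa using m1.trans m2
    have m4 : ((((k : ℤ) * u) % q) * v) % q = (k : ℤ) % q := m3
    have m5 : (k : ℤ) % q = k := Int.emod_eq_of_lt (by omega) (by exact_mod_cast hk)
    exact m4.trans m5
  have hPA : p * A ≡ 1 [ZMOD (q:ℤ)] := by
    have e1 : p * A = 1 - (q:ℤ) * Int.gcdB p q := by linarith [hbez]
    rw [e1]
    have e2 : (q:ℤ) ∣ (1 - (1 - (q:ℤ) * Int.gcdB p q)) := ⟨Int.gcdB p q, by ring⟩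
    exact (Int.modEq_iff_dvd.mpr e2)
  have hAP : A * p ≡ 1 [ZMOD (q:ℤ)] := by rw [mul_comm]; exact hPA
  have hτσ : ∀ k ∈ Finset.range q, τ (σ k) = k := by
    intro k hk
    simp only [Finset.mem_range] at hk
    have hc := cancel p A hPA k hk
    have h2 : (τ (σ k) : ℤ) = (k : ℤ) := by rw [hτcast]; simp only [hσ]; exact hc
    exact_mod_cast h2
  have hστ : ∀ j ∈ Finset.range q, σ (τ j) = j := by
    intro j hj
    simp only [Finset.mem_range] at hj
    have hc := cancel A p hAP j hj
    have h2 : (σ (τ j) : ℤ) = (j : ℤ) := by rw [hσcast]; simp only [hτ]; exact hc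
    exact_mod_cast h2
  have hτlt : ∀ j : ℕ, τ j ∈ Finset.range q := by
    intro j
    have h1 : ((j:ℤ) * A) % q < q := Int.emod_lt_of_pos _ hqZ
    have h2 := hτcast j
    simp only [Finset.mem_range]
    omega
  -- reindexing
  have reidx : ∀ g : ℕ → ℝ, ∑ k ∈ Finset.range q, g (σ k) = ∑ j ∈ Finset.range q, g j := by
    intro g
    exact Finset.sum_nbij' σ τ (fun k _ => hσlt k) (fun j _ => hτlt j) hτσ hστ
      (fun k _ => rfl)
  -- the integrals
  set G : ℕ → ℝ := fun j => ∫ x in ((j:ℝ)/q)..(((j:ℝ)+1)/q), f x with hG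
  have hGsum : ∑ j ∈ Finset.range q, G j = 0 := by
    have h := intervalIntegral.sum_integral_adjacent_intervals (μ := MeasureTheory.volume)
      (f := f) (a := fun i : ℕ => (i:ℝ)/q) (n := q)
      (fun k _ => hcont.intervalIntegrable _ _)
    have e1 : ∀ j : ℕ, (((j+1 : ℕ) : ℝ))/q = ((j:ℝ)+1)/q := by intro j; push_cast; ring
    calc ∑ j ∈ Finset.range q, G j
        = ∑ j ∈ Finset.range q, ∫ x in ((j:ℝ)/q)..(((j+1:ℕ):ℝ)/q), f x := by
          apply Finset.sum_congr rfl; intro j _; rw [e1 j]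
      _ = ∫ x in (((0:ℕ):ℝ)/q)..(((q:ℕ):ℝ)/q), f x := h
      _ = ∫ x in (0:ℝ)..1, f x := by norm_num [div_self (ne_of_gt hq0)]
      _ = 0 := hmean
  -- pointwise representation
  set ξ : ℕ → ℝ := fun k => (σ k : ℝ)/q + k * η with hξ
  have hpoint : ∀ k : ℕ, f (k * θ) = f (ξ k) := by
    intro k
    have hd := Int.mul_ediv_add_emod ((k:ℤ)*p) q
    set d : ℤ := ((k:ℤ)*p) / q with hdd
    have hm : (σ k : ℤ) = ((k:ℤ)*p) % q := hσcast k
    have e : (k:ℝ) * θ = ξ k + (d : ℝ) := by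
      have hz : ((k:ℤ)*p) = (q:ℤ)*d + (σ k : ℤ) := by rw [hm]; linarith [hd]
      have e2 : ((k:ℤ)*p : ℝ) = (q:ℝ) * (d:ℝ) + (σ k : ℝ) := by exact_mod_cast hz
      have e3 : (k : ℝ) * ((p:ℝ)/q) = (d : ℝ) + (σ k : ℝ)/q := by
        rw [mul_div_assoc']
        rw [show (k:ℝ) * p = ((k:ℤ)*p : ℝ) by push_cast; ring, e2]
        field_simp
      have e4 : (k:ℝ) * θ = (k:ℝ) * ((p:ℝ)/q) + (k:ℝ) * η := by rw [hη]; ring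
      rw [e4, e3, hξ]; ring
    rw [e]
    exact per_int f hper _ d
  have hkη : ∀ k : ℕ, k < q → |(k:ℝ) * η| ≤ 1/q := by
    intro k hk
    have h1 : |(k:ℝ) * η| = (k:ℝ) * |η| := by
      rw [abs_mul, abs_of_nonneg (by positivity : (0:ℝ) ≤ (k:ℝ))]
    have h2 : (k:ℝ) ≤ (q:ℝ) := by exact_mod_cast le_of_lt hk
    have h3 : (k:ℝ) * |η| ≤ (q:ℝ) * (1/(q:ℝ)^2) := by
      apply mul_le_mul h2 (le_of_lt happ) (abs_nonneg _) (le_of_lt hq0)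
    rw [h1]
    calc (k:ℝ) * |η| ≤ (q:ℝ) * (1/(q:ℝ)^2) := h3
      _ = 1/q := by field_simp
  have hξmem : ∀ k : ℕ, k < q → ξ k ∈ Icc (((σ k : ℝ) - 1)/q) (((σ k : ℝ)+1)/q) := by
    intro k hk
    have hh := hkη k hk
    have habs := abs_le.mp hh
    have h1q : (0:ℝ) < 1/q := by positivity
    constructor
    · rw [hξ]; simp only []
      rw [sub_div]
      nlinarith [habs.1]
    · rw [hξ]; simp only []
      rw [add_div]
      nlinarith [habs.2]
  -- variation on cells
  set VK : ℕ → ENNReal := fun j => eVariationOn f (Icc (((j:ℝ)-1)/q) (((j:ℝ)+1)/q)) with hVK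
  have hcell : ∀ j : ℕ, j < q → Icc (((j:ℝ)-1)/q) (((j:ℝ)+1)/q) ⊆ Icc (-1 : ℝ) 2 := by
    intro j hj
    have hjr : (j:ℝ) < (q:ℝ) := by exact_mod_cast hj
    have hq1 : (1:ℝ) ≤ (q:ℝ) := by exact_mod_cast hq
    apply Set.Icc_subset_Icc
    · rw [le_div_iff₀ hq0]; nlinarith [Nat.cast_nonneg (α := ℝ) j]
    · rw [div_le_iff₀ hq0]; nlinarith
  have hVKle : ∀ j : ℕ, j < q → VK j ≤ W := fun j hj => eVariationOn.mono f (hcell j hj)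
  have hVKne : ∀ j : ℕ, j < q → VK j ≠ ⊤ := fun j hj => ne_top_of_le_ne_top hWt (hVKle j hj)
  -- term bound
  have hterm : ∀ k : ℕ, k < q → |f ((k:ℝ) * θ) - (q:ℝ) * G (σ k)| ≤ (VK (σ k)).toReal := by
    intro k hk
    set j : ℕ := σ k with hj'
    have hjq : j < q := by have := hσlt k; simpa [Finset.mem_range] using this
    have hab : ((j:ℝ))/q ≤ ((j:ℝ)+1)/q := by
      apply div_le_div_of_nonneg_right ?_ hq0.le
      linarith
    have hmemx : ∀ x ∈ Set.uIoc (((j:ℝ))/q) (((j:ℝ)+1)/q),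
        x ∈ Icc (((j:ℝ)-1)/q) (((j:ℝ)+1)/q) := by
      intro x hx
      rw [Set.uIoc_of_le hab] at hx
      refine ⟨le_trans ?_ (le_of_lt hx.1), hx.2⟩
      apply div_le_div_of_nonneg_right ?_ hq0.le
      linarith
    have hξm : ξ k ∈ Icc (((j:ℝ)-1)/q) (((j:ℝ)+1)/q) := hξmem k hk
    have hC : ∀ x ∈ Set.uIoc (((j:ℝ))/q) (((j:ℝ)+1)/q),
        ‖f (ξ k) - f x‖ ≤ (VK j).toReal := by
      intro x hx
      have h1 : edist (f (ξ k)) (f x) ≤ VK j := eVariationOn.edist_le f hξm (hmemx x hx)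
      rw [edist_dist] at h1
      have h2 : dist (f (ξ k)) (f x) ≤ (VK j).toReal :=
        (ENNReal.ofReal_le_iff_le_toReal (hVKne j hjq)).mp h1
      rwa [Real.dist_eq] at h2
    have hint1 : IntervalIntegrable f MeasureTheory.volume ((j:ℝ)/q) (((j:ℝ)+1)/q) :=
      hcont.intervalIntegrable _ _
    have hint2 : IntervalIntegrable (fun _ : ℝ => f (ξ k)) MeasureTheory.volume
        ((j:ℝ)/q) (((j:ℝ)+1)/q) := intervalIntegrable_const
    have hIeq : (∫ x in ((j:ℝ)/q)..(((j:ℝ)+1)/q), (f (ξ k) - f x))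
        = f (ξ k) * (1/q) - G j := by
      rw [intervalIntegral.integral_sub hint2 hint1]
      rw [intervalIntegral.integral_const]
      have e5 : ((j:ℝ)+1)/q - (j:ℝ)/q = 1/q := by field_simp; ring
      rw [e5]
      simp [smul_eq_mul, mul_comm]
      rfl
    have hnorm := intervalIntegral.norm_integral_le_of_norm_le_const hC
    rw [hIeq] at hnorm
    have habs2 : |((j:ℝ)+1)/q - (j:ℝ)/q| = 1/q := by
      rw [show ((j:ℝ)+1)/q - (j:ℝ)/q = 1/q by field_simp; ring]
      exact abs_of_pos (by positivity)
    rw [habs2, Real.norm_eq_abs] at hnorm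
    have hfin : f ((k:ℝ) * θ) - (q:ℝ) * G j = (q:ℝ) * (f (ξ k) * (1/q) - G j) := by
      rw [hpoint k]
      field_simp
    rw [hfin, abs_mul, abs_of_pos hq0]
    calc (q:ℝ) * |f (ξ k) * (1/q) - G j| ≤ (q:ℝ) * ((VK j).toReal * (1/q)) := by
          apply mul_le_mul_of_nonneg_left hnorm (le_of_lt hq0)
      _ = (VK j).toReal := by field_simp
  -- sum splitting
  have hsplit : ∑ k ∈ Finset.range q, f ((k:ℝ) * θ)
      = ∑ k ∈ Finset.range q, (f ((k:ℝ) * θ) - (q:ℝ) * G (σ k)) := by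
    rw [Finset.sum_sub_distrib, ← Finset.mul_sum, reidx G, hGsum, mul_zero, sub_zero]
  have habs3 : |∑ k ∈ Finset.range q, f ((k:ℝ) * θ)| ≤ ∑ j ∈ Finset.range q, (VK j).toReal := by
    rw [hsplit]
    refine le_trans (Finset.abs_sum_le_sum_abs _ _) ?_
    rw [← reidx (fun j => (VK j).toReal)]
    apply Finset.sum_le_sum
    intro k hk
    simp only [Finset.mem_range] at hk
    exact hterm k hk
  -- bound the sum of cell variations
  have hVKsum : ∑ j ∈ Finset.range q, VK j ≤ W + W := by
    have hmono1 : Monotone (fun i : ℕ => ((i:ℝ))/q) := by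
      intro a b hab
      apply div_le_div_of_nonneg_right ?_ hq0.le
      exact_mod_cast hab
    have hmono2 : Monotone (fun i : ℕ => ((i:ℝ)-1)/q) := by
      intro a b hab
      apply div_le_div_of_nonneg_right ?_ hq0.le
      have : (a:ℝ) ≤ b := by exact_mod_cast hab
      linarith
    have hsplitVK : ∀ j : ℕ, VK j = eVariationOn f (Icc (((j:ℝ)-1)/q) ((j:ℝ)/q))
        + eVariationOn f (Icc ((j:ℝ)/q) (((j:ℝ)+1)/q)) := by
      intro j
      rw [hVK]
      refine (myIcc_add_Icc f ?_ ?_).symm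
      · apply div_le_div_of_nonneg_right ?_ hq0.le; linarith
      · apply div_le_div_of_nonneg_right ?_ hq0.le; linarith
    calc ∑ j ∈ Finset.range q, VK j
        = ∑ j ∈ Finset.range q, eVariationOn f (Icc (((j:ℝ)-1)/q) ((j:ℝ)/q))
          + ∑ j ∈ Finset.range q, eVariationOn f (Icc ((j:ℝ)/q) (((j:ℝ)+1)/q)) := by
          rw [← Finset.sum_add_distrib]
          apply Finset.sum_congr rfl
          intro j _; exact hsplitVK j
      _ ≤ W + W := by
          apply add_le_add
          · have ht := tele f (fun i : ℕ => ((i:ℝ)-1)/q) hmono2 q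
            have hq1 : (1:ℝ) ≤ (q:ℝ) := by exact_mod_cast hq
            have e : ∑ j ∈ Finset.range q, eVariationOn f (Icc (((j:ℝ)-1)/q) ((j:ℝ)/q))
                = ∑ j ∈ Finset.range q,
                  eVariationOn f (Icc (((j:ℝ)-1)/q) (((((j+1:ℕ)):ℝ)-1)/q)) := by
              apply Finset.sum_congr rfl
              intro j _
              congr 2
              push_cast; ring
            rw [e, ht]
            apply eVariationOn.mono
            apply Set.Icc_subset_Icc
            · simp only [Nat.cast_zero]
              rw [le_div_iff₀ hq0]; nlinarith
            · rw [div_le_iff₀ hq0]; nlinarith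
          · have ht := tele f (fun i : ℕ => ((i:ℝ))/q) hmono1 q
            have hq1 : (1:ℝ) ≤ (q:ℝ) := by exact_mod_cast hq
            have e : ∑ j ∈ Finset.range q, eVariationOn f (Icc (((j:ℝ))/q) (((j:ℝ)+1)/q))
                = ∑ j ∈ Finset.range q,
                  eVariationOn f (Icc (((j:ℝ))/q) (((((j+1:ℕ)):ℝ))/q)) := by
              apply Finset.sum_congr rfl
              intro j _
              congr 2
              push_cast; ring
            rw [e, ht]
            apply eVariationOn.mono
            apply Set.Icc_subset_Icc
            · simp only [Nat.cast_zero]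
              rw [le_div_iff₀ hq0]; nlinarith
            · rw [div_le_iff₀ hq0]; nlinarith
  calc |∑ k ∈ Finset.range q, f ((k:ℝ) * θ)| ≤ ∑ j ∈ Finset.range q, (VK j).toReal := habs3
    _ = (∑ j ∈ Finset.range q, VK j).toReal := by
        rw [ENNReal.toReal_sum]
        intro j hj
        simp only [Finset.mem_range] at hj
        exact hVKne j hj
    _ ≤ (W + W).toReal := ENNReal.toReal_mono (by simp [ENNReal.add_ne_top, hWt]) hVKsum
    _ = 2 * W.toReal := by rw [ENNReal.toReal_add hWt hWt]; ring


lemma per_int' (f : ℝ → ℝ) (hper : ∀ x : ℝ, f (x + 1) = f x) (x : ℝ) (n : ℤ) :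
    f (x + n) = f x := by
  have h : Function.Periodic f 1 := hper
  simpa using (h.int_mul n) x

-- uniform continuity for periodic continuous functions
lemma ucont (f : ℝ → ℝ) (hcont : Continuous f) (hper : ∀ x : ℝ, f (x + 1) = f x) :
    ∀ ε : ℝ, 0 < ε → ∃ δ : ℝ, 0 < δ ∧ δ ≤ 1 ∧ ∀ x y : ℝ, |x - y| ≤ δ → |f x - f y| ≤ ε := by
  intro ε hε
  have hK : IsCompact (Icc (-2 : ℝ) 3) := isCompact_Icc
  have hUC : UniformContinuousOn f (Icc (-2 : ℝ) 3) :=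
    hK.uniformContinuousOn_of_continuous (hcont.continuousOn)
  rw [Metric.uniformContinuousOn_iff] at hUC
  obtain ⟨δ, hδ, hδ'⟩ := hUC ε hε
  refine ⟨min (δ/2) 1, by positivity, min_le_right _ _, ?_⟩
  intro x y hxy
  have hd1 : |x - y| ≤ 1 := le_trans hxy (min_le_right _ _)
  have hd2 : |x - y| < δ := lt_of_le_of_lt (le_trans hxy (min_le_left _ _)) (by linarith)
  set n : ℤ := ⌊x⌋ with hn
  have hfl : (n:ℝ) ≤ x := Int.floor_le x
  have hfu : x < (n:ℝ) + 1 := Int.lt_floor_add_one x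
  have habs := abs_le.mp hd1
  have hx1 : x - n ∈ Icc (-2 : ℝ) 3 := ⟨by linarith, by linarith⟩
  have hy1 : y - n ∈ Icc (-2 : ℝ) 3 := ⟨by linarith, by linarith⟩
  have e1 : f x = f (x - n) := by
    rw [← per_int' f hper (x - n) n]; ring_nf
  have e2 : f y = f (y - n) := by
    rw [← per_int' f hper (y - n) n]; ring_nf
  rw [e1, e2]
  have := hδ' (x - n) hx1 (y - n) hy1 (by rw [Real.dist_eq]; simpa using hd2)
  rw [Real.dist_eq] at this
  exact le_of_lt this

-- the window lemma (uses evenness)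
lemma window (f : ℝ → ℝ) (hper : ∀ x : ℝ, f (x + 1) = f x) (heven : ∀ x : ℝ, f x = f (-x))
    (θ : ℝ) (Q N : ℕ) (hNQ : N ≤ Q) (P : ℤ) (δ ε' : ℝ)
    (hUC : ∀ x y : ℝ, |x - y| ≤ δ → |f x - f y| ≤ ε')
    (hQP : |(Q:ℝ)*θ - P| ≤ δ) :
    |(∑ k ∈ Finset.range (Q - N), f (k*θ)) -
      ((∑ k ∈ Finset.range Q, f (k*θ)) - (∑ k ∈ Finset.range (N+1), f (k*θ)) + f 0)|
      ≤ N * ε' := by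
  have hsum1 : (∑ k ∈ Finset.range (Q - N), f (k*θ)) + (∑ k ∈ Finset.Ico (Q - N) Q, f (k*θ))
      = ∑ k ∈ Finset.range Q, f (k*θ) := by
    rw [Finset.range_eq_Ico, Finset.range_eq_Ico]
    exact Finset.sum_Ico_consecutive (fun k : ℕ => f (k*θ)) (Nat.zero_le _) (Nat.sub_le _ _)
  have hsum2 : (∑ k ∈ Finset.range (N+1), f (k*θ))
      = (∑ i ∈ Finset.range N, f (((i+1 : ℕ))*θ)) + f ((0:ℕ)*θ) := Finset.sum_range_succ' _ _
  have hsum3 : (∑ k ∈ Finset.Ico (Q - N) Q, f (k*θ))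
      = ∑ i ∈ Finset.range N, f (((Q - N + i : ℕ))*θ) := by
    rw [Finset.sum_Ico_eq_sum_range]
    have : Q - (Q - N) = N := by omega
    rw [this]
  have hrefl : (∑ i ∈ Finset.range N, f (((i+1 : ℕ))*θ))
      = ∑ i ∈ Finset.range N, f (((N - i : ℕ))*θ) := by
    rw [← Finset.sum_range_reflect]
    apply Finset.sum_congr rfl
    intro i hi
    simp only [Finset.mem_range] at hi
    congr 2
    norm_cast
    omega
  have hmain : |∑ i ∈ Finset.range N, (f (((Q - N + i : ℕ))*θ) - f (((N - i : ℕ))*θ))|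
      ≤ N * ε' := by
    refine le_trans (Finset.abs_sum_le_sum_abs _ _) ?_
    have hb : ∀ i ∈ Finset.range N, |f (((Q - N + i : ℕ))*θ) - f (((N - i : ℕ))*θ)| ≤ ε' := by
      intro i hi
      simp only [Finset.mem_range] at hi
      set k : ℕ := Q - N + i with hk
      set m : ℕ := N - i with hm
      have hkm : k + m = Q := by omega
      have e1 : f ((k:ℝ)*θ) = f ((k:ℝ)*θ - P) := by
        rw [← per_int' f hper ((k:ℝ)*θ - P) P]; ring_nf
      have e2 : f ((m:ℝ)*θ) = f (-((m:ℝ)*θ)) := heven _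
      rw [e1, e2]
      apply hUC
      have : (k:ℝ)*θ - P - -((m:ℝ)*θ) = (Q:ℝ)*θ - P := by
        rw [← hkm]; push_cast; ring
      rw [this]
      exact hQP
    calc ∑ i ∈ Finset.range N, |f (((Q - N + i : ℕ))*θ) - f (((N - i : ℕ))*θ)|
        ≤ ∑ _i ∈ Finset.range N, ε' := Finset.sum_le_sum hb
      _ = N * ε' := by rw [Finset.sum_const, Finset.card_range]; ring
  have hzero : f ((0:ℕ)*θ) = f 0 := by norm_num
  have key : (∑ k ∈ Finset.range (Q - N), f (k*θ)) -
      ((∑ k ∈ Finset.range Q, f (k*θ)) - (∑ k ∈ Finset.range (N+1), f (k*θ)) + f 0)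
      = -(∑ i ∈ Finset.range N, (f (((Q - N + i : ℕ))*θ) - f (((N - i : ℕ))*θ))) := by
    rw [Finset.sum_sub_distrib, ← hsum3, ← hrefl, ← hsum1, hsum2, hzero]
    ring
  rw [key, abs_neg]
  exact hmain

lemma approx_unbounded (θ : ℝ) (hθ : Irrational θ) :
    ∀ D : ℕ, ∃ q : ℕ, ∃ p : ℤ, D < q ∧ Int.gcd p (q:ℤ) = 1 ∧ |θ - (p:ℝ)/q| < 1/(q:ℝ)^2 := by
  intro D
  have hT : {r : ℚ | |θ - (r:ℝ)| < 1 / (r.den : ℝ)^2}.Infinite :=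
    Real.infinite_rat_abs_sub_lt_one_div_den_sq_of_irrational hθ
  set K : ℤ := ⌈(|θ|+1) * (D:ℝ)⌉ with hK
  set Tsmall : Set ℚ := {r : ℚ | r.den ≤ D ∧ |θ - (r:ℝ)| ≤ 1} with hTs
  have hfin : Tsmall.Finite := by
    apply Set.Finite.subset (((Set.finite_Icc (-K) K).prod (Set.finite_Icc 1 D)).image
      (fun p : ℤ × ℕ => (p.1 : ℚ)/(p.2 : ℚ)))
    rintro r ⟨hden, habs⟩
    refine ⟨(r.num, r.den), ?_, ?_⟩
    · refine Set.mem_prod.mpr ⟨?_, ?_⟩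
      · have hden0 : (0:ℝ) < (r.den : ℝ) := by
          have := r.pos; exact_mod_cast this
        have hr : |(r:ℝ)| ≤ |θ| + 1 := by
          have := abs_sub_abs_le_abs_sub (r:ℝ) θ
          rw [abs_sub_comm] at this
          linarith [abs_sub_abs_le_abs_sub (r:ℝ) θ, habs, abs_nonneg (θ - (r:ℝ))]
        have hnum : |(r.num : ℝ)| ≤ (|θ|+1) * D := by
          have he : (r.num : ℝ) = (r:ℝ) * r.den := by
            rw [Rat.cast_def]
            field_simp
          rw [he, abs_mul, abs_of_pos (by exact_mod_cast r.pos : (0:ℝ) < (r.den:ℝ))]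
          have h2 : (r.den : ℝ) ≤ D := by exact_mod_cast hden
          have h3 : (0:ℝ) ≤ |(r:ℝ)| := abs_nonneg _
          nlinarith
        have hKK : (|θ|+1) * D ≤ (K:ℝ) := Int.le_ceil _
        have habs2 : |(r.num:ℝ)| ≤ (K:ℝ) := le_trans hnum hKK
        have h5 : -K ≤ r.num ∧ r.num ≤ K := abs_le.mp (by exact_mod_cast habs2)
        exact Set.mem_Icc.mpr h5
      · exact ⟨r.pos, hden⟩
    · exact Rat.num_div_den r
  obtain ⟨r, hrT, hrs⟩ := (hT.diff hfin).nonempty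
  have hden1 : (1:ℝ) ≤ (r.den : ℝ) := by exact_mod_cast r.pos
  have hle1 : |θ - (r:ℝ)| ≤ 1 := by
    refine le_trans (le_of_lt hrT) ?_
    rw [div_le_one (by positivity)]
    nlinarith
  have hDden : D < r.den := by
    by_contra hcon
    exact hrs ⟨by omega, hle1⟩
  refine ⟨r.den, r.num, hDden, ?_, ?_⟩
  · have := r.reduced
    simpa [Int.gcd] using this
  · have : ((r:ℚ):ℝ) = (r.num : ℝ)/(r.den : ℝ) := by rw [Rat.cast_def]
    rw [← this]
    exact hrT

lemma inf_ge {F : Set ℕ} (hF : F.Infinite) (n : ℕ) : ∃ q ∈ F, n ≤ q := by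
  by_contra h
  push_neg at h
  exact hF (Set.Finite.subset (Set.finite_Iio n) (fun q hq => h q hq))

open Filter in
/-- Proposition 2: for even continuous 1-periodic `f` of bounded variation
with zero mean, the liminf of `|∑_{k<Q} f(kθ)|` is zero for every irrational `θ`. -/
theorem stmt13 (f : ℝ → ℝ) (hcont : Continuous f) (hper : ∀ x : ℝ, f (x + 1) = f x)
    (heven : ∀ x : ℝ, f x = f (-x))
    (hBV : BoundedVariationOn f (Set.Icc 0 1)) (hmean : (∫ x in (0 : ℝ)..1, f x) = 0)
    (θ : ℝ) (hθ : Irrational θ) :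
    Filter.liminf (fun Q : ℕ => |∑ k ∈ Finset.range Q, f (k * θ)|) atTop = 0 := by
  set s : ℕ → ℝ := fun Q => ∑ k ∈ Finset.range Q, f (k * θ) with hs
  set B : ℝ := 2 * (eVariationOn f (Icc (-1 : ℝ) 2)).toReal with hB
  have key : ∀ ε : ℝ, 0 < ε → ∀ M : ℕ, ∃ Q : ℕ, M ≤ Q ∧ |s Q| ≤ ε := by
    intro ε hε M
    set e : ℝ := ε/4 with he
    have he0 : 0 < e := by positivity
    obtain ⟨δ₁, hδ₁0, hδ₁1, hδ₁⟩ := ucont f hcont hper e he0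
    set Sg : Set ℕ := {q : ℕ | (M+1) ≤ q ∧ (⌈1/δ₁⌉₊ + 1) ≤ q ∧
      ∃ p : ℤ, Int.gcd p (q:ℤ) = 1 ∧ |θ - (p:ℝ)/q| < 1/(q:ℝ)^2} with hSgdef
    have hSg_gt : ∀ n : ℕ, ∃ q ∈ Sg, n < q := by
      intro n
      obtain ⟨q, p, hq1, hq2, hq3⟩ :=
        approx_unbounded θ hθ (max n (max (M+1) (⌈1/δ₁⌉₊ + 1)))
      exact ⟨q, ⟨by omega, by omega, p, hq2, hq3⟩, by omega⟩
    have hSg_inf : Sg.Infinite := by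
      by_contra hcon
      rw [Set.not_infinite] at hcon
      obtain ⟨b, hb⟩ := hcon.bddAbove
      obtain ⟨q, hq, hq'⟩ := hSg_gt b
      exact absurd (hb hq) (by omega)
    have hqbound : ∀ q ∈ Sg, 0 < q ∧ (1:ℝ)/q ≤ δ₁ := by
      intro q hq
      obtain ⟨h1, h2, -⟩ := hq
      have hq0 : (0:ℝ) < q := by
        have : 0 < q := by omega
        exact_mod_cast this
      refine ⟨by omega, ?_⟩
      have hceil : 1/δ₁ ≤ (⌈1/δ₁⌉₊ : ℝ) := Nat.le_ceil _
      have hqr : (⌈1/δ₁⌉₊ : ℝ) + 1 ≤ (q:ℝ) := by exact_mod_cast h2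
      rw [div_le_iff₀ hq0]
      rw [div_le_iff₀ hδ₁0] at hceil
      nlinarith
    have hDK : ∀ q ∈ Sg, |s q| ≤ B := by
      intro q hq
      obtain ⟨h1, h2, p, h3, h4⟩ := hq
      exact DK f hcont hper hBV hmean θ p q (by omega) h3 h4
    -- pigeonhole on the value cells
    set hcell : ℕ → ℤ := fun q => ⌊s q / e⌋ with hcelldef
    set T : ℤ := ⌈B/e⌉ + 1 with hT
    have hrange : ∀ q ∈ Sg, hcell q ∈ Icc (-T) T := by
      intro q hq
      have hBq := hDK q hq
      have habs := abs_le.mp hBq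
      have hTe : B/e ≤ (T:ℝ) := by
        have := Int.le_ceil (B/e)
        rw [hT]; push_cast; linarith
      constructor
      · rw [hcelldef]
        simp only []
        rw [Int.le_floor]
        rw [show ((-T : ℤ):ℝ) = -(T:ℝ) by push_cast; ring]
        rw [le_div_iff₀ he0]
        have hBe : (B/e)*e = B := by field_simp
        nlinarith [hBe, hTe, habs.1, he0]
      · rw [hcelldef]
        simp only []
        have h1 : (⌊s q / e⌋ : ℝ) ≤ s q / e := Int.floor_le _
        have h2 : s q / e ≤ B / e := by
          apply div_le_div_of_nonneg_right habs.2 he0.le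
        have : (⌊s q / e⌋ : ℝ) ≤ (T:ℝ) := by linarith
        exact_mod_cast this
    have hfiber : ∃ t ∈ Icc (-T) T, {q | q ∈ Sg ∧ hcell q = t}.Infinite := by
      by_contra hcon
      push_neg at hcon
      apply hSg_inf
      have hsub : Sg ⊆ ⋃ t ∈ Icc (-T) T, {q | q ∈ Sg ∧ hcell q = t} := by
        intro q hq
        exact Set.mem_biUnion (hrange q hq) ⟨hq, rfl⟩
      exact Set.Finite.subset (Set.Finite.biUnion (Set.finite_Icc _ _)
        (fun t ht => hcon t ht)) hsub
    obtain ⟨t, htmem, hFinf⟩ := hfiber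
    set F : Set ℕ := {q | q ∈ Sg ∧ hcell q = t} with hF
    have cellbound : ∀ x : ℝ, ⌊x/e⌋ = t → (t:ℝ)*e ≤ x ∧ x < ((t:ℝ)+1)*e := by
      intro x hx
      have h1 : (t:ℝ) ≤ x/e := by rw [← hx]; exact Int.floor_le _
      have h2 : x/e < (t:ℝ)+1 := by
        rw [← hx]
        have := Int.lt_floor_add_one (x/e)
        push_cast
        exact_mod_cast this
      constructor
      · calc (t:ℝ)*e ≤ (x/e)*e := by nlinarith
          _ = x := by field_simp
      · calc x = (x/e)*e := by field_simp
          _ < ((t:ℝ)+1)*e := by nlinarith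
    have hclose : ∀ q ∈ F, ∀ q' ∈ F, |s q - s q'| ≤ e := by
      intro q hq q' hq'
      have b1 := cellbound (s q) hq.2
      have b2 := cellbound (s q') hq'.2
      apply abs_le.mpr
      constructor <;> nlinarith [b1.1, b1.2, b2.1, b2.2]
    -- choose q'
    obtain ⟨q', hq'F⟩ := hFinf.nonempty
    have hq'Sg : q' ∈ Sg := hq'F.1
    have hq't : hcell q' = t := hq'F.2
    obtain ⟨hq'M, hq'δ, p', hp'gcd, hp'app⟩ := hq'F.1
    have hq'pos : 0 < q' := by omega
    have hq'r : (0:ℝ) < q' := by exact_mod_cast hq'pos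
    set ε' : ℝ := e / (q' + 1) with hε'
    have hε'0 : 0 < ε' := by positivity
    obtain ⟨δ₂, hδ₂0, hδ₂1, hδ₂⟩ := ucont f hcont hper ε' hε'0
    -- choose q
    obtain ⟨q, hqF, hqge⟩ := inf_ge hFinf (max (q' + M + 1) (⌈1/δ₂⌉₊ + 1))
    have hqSg : q ∈ Sg := hqF.1
    have hqt : hcell q = t := hqF.2
    obtain ⟨hqM, hqδ, p, hpgcd, hpapp⟩ := hqF.1
    have hqq' : q' + M + 1 ≤ q := le_trans (le_max_left _ _) hqge
    have hqδ₂ : (⌈1/δ₂⌉₊ + 1 : ℕ) ≤ q := le_trans (le_max_right _ _) hqge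
    have hqpos : 0 < q := by omega
    have hqr : (0:ℝ) < q := by exact_mod_cast hqpos
    -- |q θ - p| ≤ δ₂
    have hQP : |(q:ℝ)*θ - p| ≤ δ₂ := by
      have h1 : (q:ℝ)*θ - p = (q:ℝ) * (θ - (p:ℝ)/q) := by field_simp
      rw [h1, abs_mul, abs_of_pos hqr]
      have h2 : (q:ℝ) * |θ - (p:ℝ)/q| ≤ (q:ℝ) * (1/(q:ℝ)^2) :=
        mul_le_mul_of_nonneg_left (le_of_lt hpapp) hqr.le
      have h3 : (q:ℝ) * (1/(q:ℝ)^2) = 1/q := by field_simp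
      have hceil : 1/δ₂ ≤ (⌈1/δ₂⌉₊ : ℝ) := Nat.le_ceil _
      have hqr2 : (⌈1/δ₂⌉₊ : ℝ) + 1 ≤ (q:ℝ) := by exact_mod_cast hqδ₂
      have h4 : 1/(q:ℝ) ≤ δ₂ := by
        rw [div_le_iff₀ hqr]
        rw [div_le_iff₀ hδ₂0] at hceil
        nlinarith
      linarith [h2, h3.le, h3.ge]
    -- |q' θ - p'| ≤ δ₁
    have hQ'P : |(q':ℝ)*θ - p'| ≤ δ₁ := by
      have h1 : (q':ℝ)*θ - p' = (q':ℝ) * (θ - (p':ℝ)/q') := by field_simp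
      rw [h1, abs_mul, abs_of_pos hq'r]
      have h2 : (q':ℝ) * |θ - (p':ℝ)/q'| ≤ (q':ℝ) * (1/(q':ℝ)^2) :=
        mul_le_mul_of_nonneg_left (le_of_lt hp'app) hq'r.le
      have h3 : (q':ℝ) * (1/(q':ℝ)^2) = 1/q' := by field_simp
      have h4 := (hqbound q' hq'Sg).2
      linarith [h2, h3.le, h3.ge]
    -- window estimate
    have hwin := window f hper heven θ q q' (by omega) p δ₂ ε' hδ₂ hQP
    have hsucc : (∑ k ∈ Finset.range (q'+1), f ((k:ℝ)*θ)) = s q' + f ((q':ℝ)*θ) := by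
      rw [hs]
      simp only []
      rw [Finset.sum_range_succ]
    have hf0 : |f ((q':ℝ)*θ) - f 0| ≤ e := by
      have e1 : f ((q':ℝ)*θ) = f ((q':ℝ)*θ - p') := by
        rw [← per_int' f hper ((q':ℝ)*θ - p') p']; ring_nf
      rw [e1]
      apply hδ₁
      simpa using hQ'P
    have hclose' : |s q - s q'| ≤ e := hclose q hqF q' hq'F
    have hwerr : (q':ℝ) * ε' ≤ e := by
      rw [hε']
      rw [div_eq_mul_inv]
      have : (0:ℝ) < (q':ℝ) + 1 := by positivity
      rw [mul_comm (e) _, ← mul_assoc]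
      have h5 : (q':ℝ) * ((q':ℝ)+1)⁻¹ ≤ 1 := by
        rw [mul_inv_le_iff₀ this]
        linarith
      calc ((q':ℝ) * ((q':ℝ)+1)⁻¹) * e ≤ 1 * e := mul_le_mul_of_nonneg_right h5 he0.le
        _ = e := one_mul e
    -- combine
    have hfinal : |s (q - q')| ≤ 3*e := by
      set d1 : ℝ := s (q - q') -
          (s q - (∑ k ∈ Finset.range (q'+1), f ((k:ℝ)*θ)) + f 0) with hd1
      have h6 : |d1| ≤ (q':ℝ) * ε' := hwin
      have h7 : |f 0 - f ((q':ℝ)*θ)| ≤ e := by rw [abs_sub_comm]; exact hf0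
      have hid : s (q - q') = d1 + (s q - s q') + (f 0 - f ((q':ℝ)*θ)) := by
        rw [hd1, hsucc]; ring
      have ha1 := abs_add_le (d1 + (s q - s q')) (f 0 - f ((q':ℝ)*θ))
      have ha2 := abs_add_le d1 (s q - s q')
      rw [hid]
      calc |d1 + (s q - s q') + (f 0 - f ((q':ℝ)*θ))|
          ≤ |d1 + (s q - s q')| + |f 0 - f ((q':ℝ)*θ)| := ha1
        _ ≤ |d1| + |s q - s q'| + |f 0 - f ((q':ℝ)*θ)| := by linarith
        _ ≤ (q':ℝ) * ε' + e + e := by linarith [h6, hclose', h7]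
        _ ≤ 3*e := by linarith [hwerr]
    exact ⟨q - q', by omega, by rw [he] at hfinal; linarith⟩
  -- conclude about liminf
  have hfreq : ∀ ε : ℝ, 0 < ε → ∃ᶠ Q in atTop, |s Q| ≤ ε := by
    intro ε hε
    rw [frequently_atTop]
    intro M
    obtain ⟨Q, hQ1, hQ2⟩ := key ε hε M
    exact ⟨Q, hQ1, hQ2⟩
  apply le_antisymm
  · have hb : IsBoundedUnder (· ≥ ·) atTop (fun Q => |s Q|) :=
      isBoundedUnder_of ⟨0, fun x => abs_nonneg _⟩
    have hle : ∀ ε : ℝ, 0 < ε → liminf (fun Q : ℕ => |s Q|) atTop ≤ ε := by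
      intro ε hε
      exact liminf_le_of_frequently_le (hfreq ε hε) hb
    by_contra hcon
    push_neg at hcon
    have := hle (liminf (fun Q : ℕ => |s Q|) atTop / 2) (by linarith)
    linarith
  · exact le_liminf_of_le (IsCoboundedUnder.of_frequently_le (hfreq 1 one_pos))
      (Eventually.of_forall (fun Q => abs_nonneg _))
end

section
/- Let g : [α, β] → ℝ be monotone decreasing with g(α) = A, g(β) = B, and suppose that for G = (1/3)A + (2/3)B, the sets Ω_+ = {x ∈ [α,β] : g(x) > G} and Ω_− = {x ∈ [α,β] : g(x) < G} each have Lebesgue measure less than 2δ for some δ > 0. Then (G − 2(G − B)·δ/(β−α))·(β−α) ≤ ∫_α^β g(x)dx ≤ (G + 2(A − G)·δ/(β−α))·(β−α), i.e., |∫_α^β g − G(β−α)| ≤ (4/3)(A − B)·δ. -/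
open scoped BigOperators

open MeasureTheory in
/-- integral estimate over a jump segment for a decreasing function. -/
theorem stmt16 (g : ℝ → ℝ) (α β : ℝ) (hαβ : α < β)
    (hmono : AntitoneOn g (Set.Icc α β)) (A B G δ : ℝ)
    (hA : g α = A) (hB : g β = B) (hG : G = 1 / 3 * A + 2 / 3 * B) (hδ : 0 < δ)
    (hplus : volume {x ∈ Set.Icc α β | G < g x} < ENNReal.ofReal (2 * δ))
    (hminus : volume {x ∈ Set.Icc α β | g x < G} < ENNReal.ofReal (2 * δ)) :
    (G - 2 * (G - B) * δ / (β - α)) * (β - α) ≤ (∫ x in α..β, g x) ∧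
    (∫ x in α..β, g x) ≤ (G + 2 * (A - G) * δ / (β - α)) * (β - α) ∧
    |(∫ x in α..β, g x) - G * (β - α)| ≤ 4 / 3 * (A - B) * δ := by
  have hαmem : α ∈ Set.Icc α β := ⟨le_refl _, hαβ.le⟩
  have hβmem : β ∈ Set.Icc α β := ⟨hαβ.le, le_refl _⟩
  have hBA : B ≤ A := by rw [← hA, ← hB]; exact hmono hαmem hβmem hαβ.le
  have hGA : G ≤ A := by rw [hG]; linarith
  have hBG : B ≤ G := by rw [hG]; linarith
  have hne : β - α ≠ 0 := by linarith
  -- integrability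
  have hInt : IntegrableOn g (Set.Icc α β) volume :=
    hmono.integrableOn_of_measure_ne_top ⟨hαmem, fun x hx => hx.1⟩
      ⟨hβmem, fun x hx => hx.2⟩ (by simp [Real.volume_Icc]) measurableSet_Icc
  -- the two sets
  set s : Set ℝ := {x ∈ Set.Icc α β | G < g x} with hs_def
  set u : Set ℝ := {x ∈ Set.Icc α β | g x < G} with hu_def
  have hs_sub : s ⊆ Set.Icc α β := fun x hx => hx.1
  have hu_sub : u ⊆ Set.Icc α β := fun x hx => hx.1
  have hs_meas : MeasurableSet s := by
    apply Set.OrdConnected.measurableSet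
    constructor
    intro x hx z hz y hy
    have hyI : y ∈ Set.Icc α β := ⟨hx.1.1.trans hy.1, hy.2.trans hz.1.2⟩
    exact ⟨hyI, lt_of_lt_of_le hz.2 (hmono hyI hz.1 hy.2)⟩
  have hu_meas : MeasurableSet u := by
    apply Set.OrdConnected.measurableSet
    constructor
    intro x hx z hz y hy
    have hyI : y ∈ Set.Icc α β := ⟨hx.1.1.trans hy.1, hy.2.trans hz.1.2⟩
    exact ⟨hyI, lt_of_le_of_lt (hmono hx.1 hyI hy.1) hx.2⟩
  have hIcc_vol : volume (Set.Icc α β) = ENNReal.ofReal (β - α) := by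
    simp [Real.volume_Icc]
  have hIcc_fin : volume (Set.Icc α β) ≠ ⊤ := by
    rw [hIcc_vol]; exact ENNReal.ofReal_ne_top
  have hs_fin : volume s ≠ ⊤ := (lt_of_le_of_lt (measure_mono hs_sub)
    (lt_of_le_of_ne le_top hIcc_fin)).ne
  have hu_fin : volume u ≠ ⊤ := (lt_of_le_of_lt (measure_mono hu_sub)
    (lt_of_le_of_ne le_top hIcc_fin)).ne
  set ms := (volume s).toReal with hms_def
  set mu := (volume u).toReal with hmu_def
  have hms_le : ms ≤ 2 * δ := by
    rw [hms_def]
    calc (volume s).toReal ≤ (ENNReal.ofReal (2 * δ)).toReal :=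
          ENNReal.toReal_mono ENNReal.ofReal_ne_top hplus.le
      _ = 2 * δ := ENNReal.toReal_ofReal (by linarith)
  have hmu_le : mu ≤ 2 * δ := by
    rw [hmu_def]
    calc (volume u).toReal ≤ (ENNReal.ofReal (2 * δ)).toReal :=
          ENNReal.toReal_mono ENNReal.ofReal_ne_top hminus.le
      _ = 2 * δ := ENNReal.toReal_ofReal (by linarith)
  have hms_nonneg : 0 ≤ ms := ENNReal.toReal_nonneg
  have hmu_nonneg : 0 ≤ mu := ENNReal.toReal_nonneg
  -- interval integral to set integral over Icc
  have hIeq : (∫ x in α..β, g x) = ∫ x in Set.Icc α β, g x := by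
    rw [intervalIntegral.integral_of_le hαβ.le, ← integral_Icc_eq_integral_Ioc]
  set I := ∫ x in Set.Icc α β, g x with hI_def
  -- splitting lemma (generic for a measurable subset t of Icc)
  have key : ∀ t : Set ℝ, MeasurableSet t → t ⊆ Set.Icc α β →
      I = (∫ x in t, g x) + ∫ x in Set.Icc α β \ t, g x := by
    intro t ht htsub
    have hunion : t ∪ (Set.Icc α β \ t) = Set.Icc α β := Set.union_diff_cancel htsub
    have h := setIntegral_union (μ := volume) (f := g) disjoint_sdiff_self_right
      (measurableSet_Icc.diff ht) (hInt.mono_set htsub) (hInt.mono_set Set.diff_subset)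
    rw [hunion] at h
    rw [hI_def, h]
  -- measure additivity
  have hmes : ∀ t : Set ℝ, MeasurableSet t → t ⊆ Set.Icc α β →
      (volume (Set.Icc α β \ t)).toReal = (β - α) - (volume t).toReal := by
    intro t ht htsub
    have h1 : volume (Set.Icc α β \ t) = volume (Set.Icc α β) - volume t :=
      measure_diff htsub ht.nullMeasurableSet
        ((lt_of_le_of_lt (measure_mono htsub) (lt_of_le_of_ne le_top hIcc_fin)).ne)
    rw [h1, ENNReal.toReal_sub_of_le (measure_mono htsub) hIcc_fin, hIcc_vol,
      ENNReal.toReal_ofReal (by linarith)]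
  have hAbound : ∀ x ∈ Set.Icc α β, g x ≤ A := by
    intro x hx; rw [← hA]; exact hmono hαmem hx hx.1
  have hBbound : ∀ x ∈ Set.Icc α β, B ≤ g x := by
    intro x hx; rw [← hB]; exact hmono hx hβmem hx.2
  -- upper bound
  have hup : I ≤ G * (β - α) + 2 * (A - G) * δ := by
    have h1 : (∫ x in s, g x) ≤ A * ms := by
      have := setIntegral_mono_on (μ := volume) (f := g) (g := fun _ => A)
        (hInt.mono_set hs_sub) (integrableOn_const
          (lt_of_le_of_ne le_top hs_fin).ne) hs_meas
        (fun x hx => hAbound x hx.1)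
      rw [hms_def]; simpa [setIntegral_const, mul_comm, Measure.real] using this
    have h2 : (∫ x in Set.Icc α β \ s, g x) ≤ G * ((β - α) - ms) := by
      have := setIntegral_mono_on (μ := volume) (f := g) (g := fun _ => G)
        (hInt.mono_set Set.diff_subset) (integrableOn_const
          (lt_of_le_of_lt (measure_mono Set.diff_subset)
            (lt_of_le_of_ne le_top hIcc_fin)).ne) (measurableSet_Icc.diff hs_meas)
        (fun x hx => not_lt.1 fun h => hx.2 ⟨hx.1, h⟩)
      rw [setIntegral_const, Measure.real, hmes s hs_meas hs_sub] at this
      simpa [mul_comm] using this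
    have h3 := key s hs_meas hs_sub
    have h4 : (A - G) * ms ≤ (A - G) * (2 * δ) :=
      mul_le_mul_of_nonneg_left hms_le (by linarith)
    nlinarith
  -- lower bound
  have hlow : G * (β - α) - 2 * (G - B) * δ ≤ I := by
    have h1 : B * mu ≤ ∫ x in u, g x := by
      have := setIntegral_mono_on (μ := volume) (f := fun _ => B) (g := g)
        (integrableOn_const (lt_of_le_of_ne le_top hu_fin).ne)
        (hInt.mono_set hu_sub) hu_meas
        (fun x hx => hBbound x hx.1)
      rw [hmu_def]; simpa [setIntegral_const, mul_comm, Measure.real] using this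
    have h2 : G * ((β - α) - mu) ≤ ∫ x in Set.Icc α β \ u, g x := by
      have := setIntegral_mono_on (μ := volume) (f := fun _ => G) (g := g)
        (integrableOn_const
          (lt_of_le_of_lt (measure_mono Set.diff_subset)
            (lt_of_le_of_ne le_top hIcc_fin)).ne)
        (hInt.mono_set Set.diff_subset) (measurableSet_Icc.diff hu_meas)
        (fun x hx => not_lt.1 fun h => hx.2 ⟨hx.1, h⟩)
      rw [setIntegral_const, Measure.real, hmes u hu_meas hu_sub] at this
      simpa [mul_comm] using this
    have h3 := key u hu_meas hu_sub
    have h4 : (G - B) * mu ≤ (G - B) * (2 * δ) :=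
      mul_le_mul_of_nonneg_left hmu_le (by linarith)
    nlinarith
  rw [hIeq]
  refine ⟨?_, ?_, ?_⟩
  · have : (G - 2 * (G - B) * δ / (β - α)) * (β - α) = G * (β - α) - 2 * (G - B) * δ := by
      field_simp
    rw [this]; exact hlow
  · have : (G + 2 * (A - G) * δ / (β - α)) * (β - α) = G * (β - α) + 2 * (A - G) * δ := by
      field_simp
    rw [this]; exact hup
  · rw [abs_le]
    constructor
    · nlinarith
    · nlinarith
end

section
/- Let θ be irrational with convergent denominators Q_ν and let f be continuous 1-periodic with modulus of continuity ω. Then for any Q ∈ ℕ, ν, μ with Q = Q_ν − Q_μ ≥ 0, one has |∑_{k=0}^{Q_μ − 1} f(kθ + (Q_ν − Q_μ)θ) − ∑_{k=0}^{Q_μ − 1} f(kθ)| ≤ Q_μ·(ω(‖Q_ν θ‖) + ω(‖Q_μ θ‖)). -/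
open scoped BigOperators

/-- The modulus of continuity of `f`. -/
noncomputable def modCont (f : ℝ → ℝ) (δ : ℝ) : ℝ :=
  sSup {d : ℝ | ∃ x y : ℝ, |x - y| < δ ∧ d = |f x - f y|}

lemma cq_irrational (θ : ℝ) (hθ : Irrational θ) (n : ℕ) : Irrational (cq θ n) := by
  induction n with
  | zero => exact hθ
  | succ n ih =>
    have hf : Irrational (Int.fract (cq θ n)) := by
      rw [Int.fract]; exact ih.sub_intCast _
    simpa [cq, one_div] using hf.inv

lemma cq_gt_one (θ : ℝ) (hθ : Irrational θ) (n : ℕ) : 1 < cq θ (n + 1) := by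
  have hirr := cq_irrational θ hθ n
  have h0 : 0 < Int.fract (cq θ n) := by
    rcases lt_or_eq_of_le (Int.fract_nonneg (cq θ n)) with h | h
    · exact h
    · exfalso
      have : Irrational (Int.fract (cq θ n)) := by
        rw [Int.fract]; exact hirr.sub_intCast _
      exact this.ne_int 0 (by rw [← h]; simp)
  have h1 : Int.fract (cq θ n) < 1 := Int.fract_lt_one _
  rw [cq]
  rw [lt_div_iff₀ h0]
  simpa using h1

lemma pq_pos (θ : ℝ) (hθ : Irrational θ) (n : ℕ) : 1 ≤ pq θ (n + 1) := by
  have := cq_gt_one θ hθ n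
  have : (1 : ℤ) ≤ ⌊cq θ (n + 1)⌋ := by
    rw [Int.le_floor]; exact_mod_cast this.le
  exact this

lemma qden_pos (θ : ℝ) (hθ : Irrational θ) (n : ℕ) : 1 ≤ qden θ n := by
  induction n using Nat.strong_induction_on with
  | _ n ih =>
    match n with
    | 0 => simp [qden]
    | 1 => simpa [qden] using pq_pos θ hθ 0
    | n + 2 =>
      have h1 := ih (n + 1) (by omega)
      have h0 := ih n (by omega)
      have hp := pq_pos θ hθ (n + 1)
      rw [qden]
      nlinarith

lemma nint_pos (x : ℝ) (hx : Irrational x) : 0 < nint x := by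
  rw [nint, abs_pos, sub_ne_zero]
  exact hx.ne_int _

lemma modCont_bound (f : ℝ → ℝ) (hcont : Continuous f)
    (hper : ∀ x : ℝ, f (x + 1) = f x) {δ : ℝ} (hδ : 0 < δ)
    (x y : ℝ) (h : |x - y| ≤ δ) : |f x - f y| ≤ modCont f δ := by
  -- f is bounded
  have hP : Function.Periodic f 1 := hper
  obtain ⟨M, hM⟩ : ∃ M, ∀ z ∈ Set.Icc (0:ℝ) 1, |f z| ≤ M := by
    obtain ⟨M, hM⟩ := (isCompact_Icc (a := (0:ℝ)) (b := 1)).exists_bound_of_continuousOn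
      hcont.continuousOn
    exact ⟨M, fun z hz => by simpa using hM z hz⟩
  have hMall : ∀ z : ℝ, |f z| ≤ M := by
    intro z
    have : f z = f (Int.fract z) := by
      have := hP.sub_int_mul_eq (x := z) ⌊z⌋
      rw [Int.fract]; rw [← this]; norm_num
    rw [this]
    exact hM _ ⟨Int.fract_nonneg z, (Int.fract_lt_one z).le⟩
  set S := {d : ℝ | ∃ x y : ℝ, |x - y| < δ ∧ d = |f x - f y|} with hS
  have hbdd : BddAbove S := by
    refine ⟨2 * M, fun d hd => ?_⟩
    obtain ⟨a, b, _, rfl⟩ := hd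
    calc |f a - f b| ≤ |f a| + |f b| := abs_sub _ _
      _ ≤ M + M := add_le_add (hMall a) (hMall b)
      _ = 2 * M := by ring
  -- limit argument along t → 1⁻, t ∈ (0,1)
  have key : ∀ t ∈ Set.Ioo (0:ℝ) 1, |f (y + t * (x - y)) - f y| ≤ modCont f δ := by
    intro t ht
    apply le_csSup hbdd
    refine ⟨y + t * (x - y), y, ?_, rfl⟩
    have : |y + t * (x - y) - y| = t * |x - y| := by
      rw [add_sub_cancel_left, abs_mul, abs_of_pos ht.1]
    rw [this]
    calc t * |x - y| ≤ t * δ := by nlinarith [ht.1.le]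
      _ < 1 * δ := by nlinarith [ht.2]
      _ = δ := one_mul δ
  have hg : Filter.Tendsto (fun t : ℝ => |f (y + t * (x - y)) - f y|)
      (nhdsWithin 1 (Set.Iio 1)) (nhds (|f x - f y|)) := by
    have hc : Continuous (fun t : ℝ => |f (y + t * (x - y)) - f y|) := by
      continuity
    have := hc.tendsto 1
    simp only [one_mul, add_sub_cancel] at this
    exact this.mono_left nhdsWithin_le_nhds
  refine le_of_tendsto hg ?_
  have h1 : ∀ᶠ t in nhdsWithin (1:ℝ) (Set.Iio 1), t < 1 :=
    eventually_mem_nhdsWithin.mono (fun t ht => ht)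
  have h2 : ∀ᶠ t in nhdsWithin (1:ℝ) (Set.Iio 1), (0:ℝ) < t := by
    apply Filter.Eventually.filter_mono nhdsWithin_le_nhds
    exact eventually_gt_nhds one_pos
  filter_upwards [h1, h2] with t ht1 ht0
  exact key t ⟨ht0, ht1⟩

/-- shifting a Birkhoff sum by `(Q_ν − Q_μ)θ` changes it by at most
`Q_μ (ω(‖Q_ν θ‖) + ω(‖Q_μ θ‖))`. -/
theorem stmt17 (θ : ℝ) (hθ : Irrational θ) (f : ℝ → ℝ)
    (hcont : Continuous f) (hper : ∀ x : ℝ, f (x + 1) = f x)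
    (ν μ : ℕ) (hQ : qden θ μ ≤ qden θ ν) :
    |∑ k ∈ Finset.range (qden θ μ).toNat,
        f (k * θ + ((qden θ ν : ℝ) - (qden θ μ : ℝ)) * θ) -
      ∑ k ∈ Finset.range (qden θ μ).toNat, f (k * θ)| ≤
    (qden θ μ : ℝ) *
      (modCont f (nint ((qden θ ν : ℝ) * θ)) + modCont f (nint ((qden θ μ : ℝ) * θ))) := by
  have hP : Function.Periodic f 1 := hper
  set Qν : ℝ := (qden θ ν : ℝ)
  set Qμ : ℝ := (qden θ μ : ℝ)
  have hQνirr : Irrational (Qν * θ) := hθ.intCast_mul (by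
    have := qden_pos θ hθ ν; omega)
  have hQμirr : Irrational (Qμ * θ) := hθ.intCast_mul (by
    have := qden_pos θ hθ μ; omega)
  have hδν : 0 < nint (Qν * θ) := nint_pos _ hQνirr
  have hδμ : 0 < nint (Qμ * θ) := nint_pos _ hQμirr
  set rν : ℤ := round (Qν * θ)
  set rμ : ℤ := round (Qμ * θ)
  have term_bound : ∀ k : ℕ,
      |f (k * θ + (Qν - Qμ) * θ) - f (k * θ)| ≤
        modCont f (nint (Qν * θ)) + modCont f (nint (Qμ * θ)) := by
    intro k
    have step1 : |f (k * θ + (Qν - Qμ) * θ) - f (k * θ - Qμ * θ)| ≤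
        modCont f (nint (Qν * θ)) := by
      have heq : f (k * θ - Qμ * θ) = f (k * θ - Qμ * θ + rν) := by
        have := hP.sub_int_mul_eq (x := k * θ - Qμ * θ + rν) rν
        rw [← this]; ring_nf
      rw [heq]
      apply modCont_bound f hcont hper hδν
      have : k * θ + (Qν - Qμ) * θ - (k * θ - Qμ * θ + rν) = Qν * θ - rν := by ring
      rw [this]
      exact le_of_eq rfl
    have step2 : |f (k * θ - Qμ * θ) - f (k * θ)| ≤ modCont f (nint (Qμ * θ)) := by
      have heq : f (k * θ) = f (k * θ - rμ) := by
        have := hP.sub_int_mul_eq (x := k * θ) rμ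
        rw [← this]; ring_nf
      rw [heq]
      apply modCont_bound f hcont hper hδμ
      have : k * θ - Qμ * θ - (k * θ - rμ) = -(Qμ * θ - rμ) := by ring
      rw [this, abs_neg]
      exact le_of_eq rfl
    calc |f (k * θ + (Qν - Qμ) * θ) - f (k * θ)|
        ≤ |f (k * θ + (Qν - Qμ) * θ) - f (k * θ - Qμ * θ)| +
          |f (k * θ - Qμ * θ) - f (k * θ)| := abs_sub_le _ _ _
      _ ≤ _ := add_le_add step1 step2
  calc |∑ k ∈ Finset.range (qden θ μ).toNat, f (k * θ + (Qν - Qμ) * θ) -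
          ∑ k ∈ Finset.range (qden θ μ).toNat, f (k * θ)|
      = |∑ k ∈ Finset.range (qden θ μ).toNat,
          (f (k * θ + (Qν - Qμ) * θ) - f (k * θ))| := by
        rw [Finset.sum_sub_distrib]
    _ ≤ ∑ k ∈ Finset.range (qden θ μ).toNat,
          |f (k * θ + (Qν - Qμ) * θ) - f (k * θ)| := Finset.abs_sum_le_sum_abs _ _
    _ ≤ ∑ _k ∈ Finset.range (qden θ μ).toNat,
          (modCont f (nint (Qν * θ)) + modCont f (nint (Qμ * θ))) :=
        Finset.sum_le_sum fun k _ => term_bound k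
    _ = ((qden θ μ).toNat : ℝ) *
          (modCont f (nint (Qν * θ)) + modCont f (nint (Qμ * θ))) := by
        rw [Finset.sum_const, Finset.card_range, nsmul_eq_mul]
    _ = Qμ * (modCont f (nint (Qν * θ)) + modCont f (nint (Qμ * θ))) := by
        congr 1
        have := qden_pos θ hθ μ
        have h := Int.toNat_of_nonneg (by omega : (0:ℤ) ≤ qden θ μ)
        simp only [Qμ]
        exact_mod_cast congrArg (fun z : ℤ => (z : ℝ)) h
end
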